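/- Let f: ℝᵈ → ℝ be L-smooth and bounded below by f*, and suppose E[g_t|x_t] = ∇f(x_t) and E‖g_t‖² ≤ σ². Then SGD with step-size γ = 1/√(T+1) satisfies min_{t∈[T]} E‖∇f(x_t)‖² ≤ (2(f(x₀)-f*) + Lσ²)/(2√(T+1)). -/

import Mathlib

open MeasureTheory RealInnerProductSpace


theorem sgd_condexp_ae_eq_condExpL2 {Ω E : Type*} {m m0 : MeasurableSpace Ω}
    [NormedAddCommGroup E] [InnerProductSpace ℝ E] [CompleteSpace E]
    (hm : m ≤ m0) (μ : Measure Ω) [IsFiniteMeasure μ]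
    {g : Ω → E} (hg : MemLp g 2 μ) :
    μ[g|m] =ᵐ[μ] ((condExpL2 E ℝ hm (hg.toLp g) : Lp E 2 μ) : Ω → E) := by
  haveI : SigmaFinite (μ.trim hm) := by
    haveI := isFiniteMeasure_trim (μ := μ) hm
    infer_instance
  refine (ae_eq_condExp_of_forall_setIntegral_eq hm (hg.integrable one_le_two)
    (fun s _ hμs => (integrable_condExpL2_of_isFiniteMeasure hm).integrableOn)
    (fun s hs hμs => ?_)
    (aestronglyMeasurable_condExpL2 hm _)).symm
  rw [integral_condExpL2_eq hm (hg.toLp g) hs hμs.ne]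
  exact setIntegral_congr_ae (hm s hs) (hg.coeFn_toLp.mono fun ω hω _ => hω)

theorem sgd_condexp_inner {Ω E : Type*} {m m0 : MeasurableSpace Ω}
    [NormedAddCommGroup E] [InnerProductSpace ℝ E] [CompleteSpace E]
    (hm : m ≤ m0) (μ : Measure Ω) [IsFiniteMeasure μ] {g h : Ω → E}
    (hg : MemLp g 2 μ) (hcond : μ[g|m] =ᵐ[μ] h) :
    MemLp h 2 μ ∧ Integrable (fun ω => (⟪h ω, g ω⟫ : ℝ)) μ ∧
      ∫ ω, (⟪h ω, g ω⟫ : ℝ) ∂μ = ∫ ω, ‖h ω‖ ^ 2 ∂μ := by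
  set G2 := hg.toLp g with hG2
  set H : Lp E 2 μ := (condExpL2 E ℝ hm G2 : Lp E 2 μ) with hH
  have hbridge : μ[g|m] =ᵐ[μ] H := sgd_condexp_ae_eq_condExpL2 hm μ hg
  have hhH : h =ᵐ[μ] H := hcond.symm.trans hbridge
  have hmemH : MemLp h 2 μ := (Lp.memLp H).ae_eq hhH.symm
  have hinner : Integrable (fun ω => (⟪h ω, g ω⟫ : ℝ)) μ := by
    refine (L2.integrable_inner (𝕜 := ℝ) H G2).congr ?_
    filter_upwards [hhH, hg.coeFn_toLp] with ω h1 h2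
    rw [h1, h2]
  refine ⟨hmemH, hinner, ?_⟩
  have e1 : ∫ ω, (⟪h ω, g ω⟫ : ℝ) ∂μ = (⟪H, G2⟫ : ℝ) := by
    rw [L2.inner_def]
    refine integral_congr_ae ?_
    filter_upwards [hhH, hg.coeFn_toLp] with ω h1 h2
    rw [h1, h2]
  have e2 : (⟪G2, H⟫ : ℝ) = (⟪H, H⟫ : ℝ) :=
    (inner_condExpL2_eq_inner_fun hm G2 H (aestronglyMeasurable_condExpL2 hm G2)).symm
  have e3 : (⟪H, H⟫ : ℝ) = ∫ ω, ‖h ω‖ ^ 2 ∂μ := by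
    rw [L2.inner_def]
    refine integral_congr_ae ?_
    filter_upwards [hhH] with ω h1
    rw [h1, real_inner_self_eq_norm_sq]
  rw [e1, real_inner_comm, e2, e3]

/-- Non-convex convergence of SGD: if `f` is `L`-smooth with gradient `f'`,
bounded below by `f⋆`, the stochastic gradients are unbiased
(`E[g t | x t] = ∇f (x t)`) with `E‖g t‖² ≤ σ²`, then SGD with step-size
`γ = 1/√(T+1)` satisfies
`min_{t ≤ T} E‖∇f (x t)‖² ≤ (2(f x₀ - f⋆) + Lσ²)/(2√(T+1))`. -/
theorem sgd_nonconvex_convergence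
    {d : ℕ} {Ω : Type*} [MeasurableSpace Ω] (μ : Measure Ω)
    [IsProbabilityMeasure μ]
    (f : EuclideanSpace ℝ (Fin d) → ℝ) (f' : EuclideanSpace ℝ (Fin d) → EuclideanSpace ℝ (Fin d))
    (L : ℝ) (hL : 0 < L)
    (hsmooth : ∀ x y, |f y - (f x + (inner ℝ (f' x) (y - x) : ℝ))| ≤ L / 2 * ‖y - x‖ ^ 2)
    (fstar : ℝ) (hbelow : ∀ x, fstar ≤ f x)
    (σ : ℝ) (hσ : 0 ≤ σ)
    (T : ℕ) (γ : ℝ) (hγ : γ = 1 / Real.sqrt (T + 1))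
    (x g : ℕ → Ω → EuclideanSpace ℝ (Fin d))
    (x0 : EuclideanSpace ℝ (Fin d)) (hx0 : ∀ ω, x 0 ω = x0)
    (hstep : ∀ t ω, x (t + 1) ω = x t ω - γ • g t ω)
    (hmeas : ∀ t, Measurable (x t)) (hgmeas : ∀ t, Measurable (g t))
    (hgint : ∀ t, Integrable (g t) μ)
    (hgint2 : ∀ t, Integrable (fun ω => ‖g t ω‖ ^ 2) μ)
    (hunbiased : ∀ t,
      μ[g t | MeasurableSpace.comap (x t) (by infer_instance)]
        =ᵐ[μ] fun ω => f' (x t ω))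
    (hvar : ∀ t, ∫ ω, ‖g t ω‖ ^ 2 ∂μ ≤ σ ^ 2) :
    ∃ t ≤ T, ∫ ω, ‖f' (x t ω)‖ ^ 2 ∂μ
      ≤ (2 * (f x0 - fstar) + L * σ ^ 2) / (2 * Real.sqrt (T + 1)) := by
  -- continuity of f
  have hfc : Continuous f := by
    rw [continuous_iff_continuousAt]
    intro a
    have hb : Filter.Tendsto (fun y => ‖f' a‖ * ‖y - a‖ + L / 2 * ‖y - a‖ ^ 2)
        (nhds a) (nhds 0) := by
      have hc : Continuous fun y : EuclideanSpace ℝ (Fin d) =>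
          ‖f' a‖ * ‖y - a‖ + L / 2 * ‖y - a‖ ^ 2 := by continuity
      have := hc.tendsto a
      simpa using this
    have he : Filter.Tendsto (fun y => f y - f a) (nhds a) (nhds 0) := by
      refine squeeze_zero_norm (fun y => ?_) hb
      have h1 := abs_le.mp (hsmooth a y)
      have h2 := abs_le.mp (abs_real_inner_le_norm (f' a) (y - a))
      rw [Real.norm_eq_abs, abs_le]
      constructor <;> [linarith [h1.1, h2.1]; linarith [h1.2, h2.2]]
    have := he.add_const (f a)
    simpa [ContinuousAt] using this
  have hg2 : ∀ t, MemLp (g t) 2 μ := fun t =>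
    (memLp_two_iff_integrable_sq_norm (hgmeas t).aestronglyMeasurable).mpr (hgint2 t)
  have hx2 : ∀ t, MemLp (x t) 2 μ := by
    intro t
    induction t with
    | zero =>
      have hxe : x 0 = fun _ => x0 := funext hx0
      rw [hxe]; exact memLp_const x0
    | succ n ih =>
      have hxe : x (n + 1) = fun ω => x n ω - γ • g n ω := funext (hstep n)
      rw [hxe]
      exact ih.sub ((hg2 n).const_smul γ)
  have hfint : ∀ t, Integrable (fun ω => f (x t ω)) μ := by
    intro t
    have hxt : MemLp (fun ω => x t ω - x0) 2 μ := (hx2 t).sub (memLp_const x0)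
    have i1 : Integrable (fun ω => ‖x t ω - x0‖) μ := (hxt.integrable one_le_two).norm
    have i2 : Integrable (fun ω => ‖x t ω - x0‖ ^ 2) μ :=
      (memLp_two_iff_integrable_sq_norm hxt.aestronglyMeasurable).mp hxt
    refine Integrable.mono'
      (((i1.const_mul ‖f' x0‖).add (i2.const_mul (L / 2))).add (integrable_const |f x0|))
      ((hfc.measurable.comp (hmeas t)).aestronglyMeasurable)
      (Filter.Eventually.of_forall fun ω => ?_)
    simp only [Pi.add_apply]
    have h1 := abs_le.mp (hsmooth x0 (x t ω))
    have h2 := abs_le.mp (abs_real_inner_le_norm (f' x0) (x t ω - x0))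
    have h4 := le_abs_self (f x0)
    have h5 := neg_abs_le (f x0)
    rw [Real.norm_eq_abs, abs_le]
    constructor <;> [linarith [h1.1, h2.1]; linarith [h1.2, h2.2]]
  -- the key per-t facts
  have hkey : ∀ t, MemLp (fun ω => f' (x t ω)) 2 μ ∧
      Integrable (fun ω => (⟪f' (x t ω), g t ω⟫ : ℝ)) μ ∧
      ∫ ω, (⟪f' (x t ω), g t ω⟫ : ℝ) ∂μ = ∫ ω, ‖f' (x t ω)‖ ^ 2 ∂μ := by
    intro t
    have hm : MeasurableSpace.comap (x t) (by infer_instance) ≤ _ := (hmeas t).comap_le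
    exact sgd_condexp_inner hm μ (hg2 t) (hunbiased t)
  set F : ℕ → ℝ := fun t => ∫ ω, f (x t ω) ∂μ with hF
  set Gq : ℕ → ℝ := fun t => ∫ ω, ‖f' (x t ω)‖ ^ 2 ∂μ with hGq
  have stepA : ∀ t, F (t + 1) ≤ F t - γ * Gq t + L * γ ^ 2 / 2 * σ ^ 2 := by
    intro t
    obtain ⟨hfx2, hinner_int, hid⟩ := hkey t
    have hpt : ∀ ω, f (x (t + 1) ω) ≤
        f (x t ω) - γ * ⟪f' (x t ω), g t ω⟫ + L * γ ^ 2 / 2 * ‖g t ω‖ ^ 2 := by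
      intro ω
      have h1 := (abs_le.mp (hsmooth (x t ω) (x (t + 1) ω))).2
      have hxx : x (t + 1) ω - x t ω = -(γ • g t ω) := by rw [hstep t ω]; abel
      rw [hxx] at h1
      have h2 : (⟪f' (x t ω), -(γ • g t ω)⟫ : ℝ) = -(γ * ⟪f' (x t ω), g t ω⟫) := by
        rw [inner_neg_right, real_inner_smul_right]
      have h3 : ‖-(γ • g t ω)‖ ^ 2 = γ ^ 2 * ‖g t ω‖ ^ 2 := by
        rw [norm_neg, norm_smul, mul_pow, Real.norm_eq_abs, sq_abs]
      rw [h2, h3] at h1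
      nlinarith [h1]
    have hI2 : Integrable (fun ω => γ * (⟪f' (x t ω), g t ω⟫ : ℝ)) μ :=
      hinner_int.const_mul γ
    have hI1 : Integrable (fun ω => f (x t ω) - γ * (⟪f' (x t ω), g t ω⟫ : ℝ)) μ :=
      (hfint t).sub hI2
    have hI3 : Integrable (fun ω => L * γ ^ 2 / 2 * ‖g t ω‖ ^ 2) μ :=
      (hgint2 t).const_mul (L * γ ^ 2 / 2)
    have hRHSint : Integrable (fun ω =>
        f (x t ω) - γ * ⟪f' (x t ω), g t ω⟫ + L * γ ^ 2 / 2 * ‖g t ω‖ ^ 2) μ :=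
      hI1.add hI3
    have hle1 : F (t + 1) ≤ ∫ ω, (f (x t ω) - γ * ⟪f' (x t ω), g t ω⟫
        + L * γ ^ 2 / 2 * ‖g t ω‖ ^ 2) ∂μ :=
      integral_mono (hfint (t + 1)) hRHSint hpt
    have heq : ∫ ω, (f (x t ω) - γ * ⟪f' (x t ω), g t ω⟫
        + L * γ ^ 2 / 2 * ‖g t ω‖ ^ 2) ∂μ
        = F t - γ * Gq t + L * γ ^ 2 / 2 * ∫ ω, ‖g t ω‖ ^ 2 ∂μ := by
      rw [integral_add hI1 hI3, integral_sub (hfint t) hI2, integral_const_mul,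
        integral_const_mul, hid]
    have hb : L * γ ^ 2 / 2 * ∫ ω, ‖g t ω‖ ^ 2 ∂μ ≤ L * γ ^ 2 / 2 * σ ^ 2 :=
      mul_le_mul_of_nonneg_left (hvar t) (by positivity)
    rw [heq] at hle1
    linarith
  -- telescoping
  have htel : F (T + 1) - F 0 = ∑ t ∈ Finset.range (T + 1), (F (t + 1) - F t) :=
    (Finset.sum_range_sub F (T + 1)).symm
  have hsum : ∑ t ∈ Finset.range (T + 1), (F (t + 1) - F t)
      ≤ ∑ t ∈ Finset.range (T + 1), (-(γ * Gq t) + L * γ ^ 2 / 2 * σ ^ 2) :=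
    Finset.sum_le_sum fun t _ => by have := stepA t; linarith
  have hsum2 : ∑ t ∈ Finset.range (T + 1), (-(γ * Gq t) + L * γ ^ 2 / 2 * σ ^ 2)
      = -(γ * ∑ t ∈ Finset.range (T + 1), Gq t) + ((T : ℝ) + 1) * (L * γ ^ 2 / 2 * σ ^ 2) := by
    rw [Finset.sum_add_distrib, Finset.sum_neg_distrib, Finset.sum_const, Finset.card_range,
      nsmul_eq_mul, Finset.mul_sum]
    push_cast; ring
  have hF0 : F 0 = f x0 := by
    have hxe : (fun ω => f (x 0 ω)) = fun _ => f x0 := by funext ω; rw [hx0]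
    simp only [hF, hxe, integral_const, measure_univ, ENNReal.toReal_one, smul_eq_mul, one_mul, probReal_univ]
  have hFT : fstar ≤ F (T + 1) := by
    have := integral_mono (integrable_const fstar) (hfint (T + 1))
      (fun ω => hbelow (x (T + 1) ω))
    simpa [integral_const, measure_univ] using this
  have hkey2 : γ * ∑ t ∈ Finset.range (T + 1), Gq t
      ≤ (f x0 - fstar) + ((T : ℝ) + 1) * (L * γ ^ 2 / 2 * σ ^ 2) := by
    rw [hsum2] at hsum
    linarith [htel, hsum, hFT, hF0.symm ▸ le_refl (F 0)]
  have hΔ : 0 ≤ f x0 - fstar := sub_nonneg.mpr (hbelow x0)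
  have hspos : 0 < Real.sqrt ((T : ℝ) + 1) := Real.sqrt_pos.mpr (by positivity)
  have hs2 : Real.sqrt ((T : ℝ) + 1) ^ 2 = (T : ℝ) + 1 := Real.sq_sqrt (by positivity)
  have hfinal : ∑ t ∈ Finset.range (T + 1), Gq t
      ≤ ((T : ℝ) + 1) * ((2 * (f x0 - fstar) + L * σ ^ 2) / (2 * Real.sqrt ((T : ℝ) + 1))) := by
    rw [hγ] at hkey2
    set s := Real.sqrt ((T : ℝ) + 1) with hsdef
    rw [← hs2] at hkey2 ⊢
    have hsne : s ≠ 0 := hspos.ne'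
    have hrhs : s ^ 2 * ((2 * (f x0 - fstar) + L * σ ^ 2) / (2 * s))
        = s * (f x0 - fstar) + s * (L * σ ^ 2) / 2 := by
      field_simp
    have h := mul_le_mul_of_nonneg_left hkey2 hspos.le
    have e1 : s * (1 / s * ∑ t ∈ Finset.range (T + 1), Gq t)
        = ∑ t ∈ Finset.range (T + 1), Gq t := by
      field_simp
    have e2 : s * (f x0 - fstar + s ^ 2 * (L * (1 / s) ^ 2 / 2 * σ ^ 2))
        = s * (f x0 - fstar) + s * (L * σ ^ 2) / 2 := by
      field_simp
    rw [e1, e2] at h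
    rw [hrhs]
    exact h
  have hmono : ∑ t ∈ Finset.range (T + 1), Gq t
      ≤ ∑ t ∈ Finset.range (T + 1),
        (fun _ : ℕ => (2 * (f x0 - fstar) + L * σ ^ 2) / (2 * Real.sqrt ((T : ℝ) + 1))) t := by
    rw [Finset.sum_const, Finset.card_range, nsmul_eq_mul]
    push_cast
    exact hfinal
  obtain ⟨t0, ht0mem, ht0⟩ := Finset.exists_le_of_sum_le
    (Finset.nonempty_range_iff.mpr (Nat.succ_ne_zero T)) hmono
  exact ⟨t0, Nat.lt_succ_iff.mp (Finset.mem_range.mp ht0mem), ht0⟩
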